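/- arXiv:2508.11589 — 3 statements merged into one kernel-verified Lean document; each statement's English description precedes it below -/
import Mathlib

section
/- Let R be a commutative ring, M an R-module that is p-adically separated (i.e. the intersection of p^n·M over all n is zero), and d : R → M a derivation (an additive map satisfying the Leibniz rule d(xy) = x·d(y) + y·d(x)). Suppose u ∈ R admits a compatible system of p-power roots, i.e. there is a sequence (u_n)_{n≥0} in R with u_0 = u and u_n^p = u_{n-1} for all n ≥ 1. Then d(u) = 0. -/
/-- Let `R` be a commutative ring, `M` an `R`-module that is `p`-adically
separated (the intersection of `p^n • M` over all `n` is zero), and `d : R → M` a derivation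
(an additive map satisfying the Leibniz rule).  If `u ∈ R` admits a compatible system of
`p`-power roots `(u_n)` with `u_0 = u` and `u_n ^ p = u_{n-1}`, then `d u = 0`. -/
theorem stmt0 (p : ℕ) (R : Type*) [CommRing R] (M : Type*) [AddCommGroup M] [Module R M]
    (hsep : ∀ m : M, (∀ n : ℕ, ∃ m' : M, m = ((p : R) ^ n) • m') → m = 0)
    (d : R → M)
    (hadd : ∀ x y : R, d (x + y) = d x + d y)
    (hleib : ∀ x y : R, d (x * y) = x • d y + y • d x)
    (u : R) (u' : ℕ → R) (hu0 : u' 0 = u)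
    (hroot : ∀ n : ℕ, 1 ≤ n → (u' n) ^ p = u' (n - 1)) :
    d u = 0 := by
  have hd1 : d 1 = 0 := by
    have := hleib 1 1
    simp only [one_mul, one_smul] at this
    have h2 : d 1 = d 1 + d 1 := this
    have := add_left_cancel (a := d 1) (b := 0) (c := d 1) (by rw [add_zero]; exact h2)
    exact this.symm
  have hpow : ∀ (k : ℕ) (x : R), 1 ≤ k → d (x ^ k) = (k : R) • (x ^ (k - 1) • d x) := by
    intro k
    induction k with
    | zero => intro x h; omega
    | succ k ih =>
      intro x _
      rcases Nat.eq_zero_or_pos k with hk | hk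
      · subst hk; simp
      · have : x ^ (k + 1) = x * x ^ k := by ring
        rw [this, hleib, ih x hk]
        have hxk : x • ((k : R) • (x ^ (k - 1) • d x)) = (k : R) • (x ^ k • d x) := by
          have hx : x * x ^ (k - 1) = x ^ k := by
            rw [← pow_succ']; congr 1; omega
          rw [smul_smul, smul_smul, smul_smul, mul_comm x (k:R), mul_assoc, hx]
        rw [hxk]
        have : x ^ k • d x = (1 : R) • (x ^ k • d x) := by rw [one_smul]
        calc (k : R) • (x ^ k • d x) + x ^ k • d x
            = ((k : R) + 1) • (x ^ k • d x) := by rw [add_smul, one_smul]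
          _ = ((k + 1 : ℕ) : R) • (x ^ (k + 1 - 1) • d x) := by
              push_cast; simp
  -- u = u' n ^ p ^ n
  have hu : ∀ n : ℕ, u' n ^ p ^ n = u := by
    intro n
    induction n with
    | zero => simpa using hu0
    | succ n ih =>
      rw [pow_succ, pow_mul', hroot (n + 1) (by omega)]
      simpa using ih
  rcases Nat.eq_zero_or_pos p with hp | hp
  · subst hp
    have : u = 1 := by have := hu 1; simpa using this.symm
    rw [this, hd1]
  · apply hsep
    intro n
    refine ⟨(u' n) ^ (p ^ n - 1) • d (u' n), ?_⟩
    have hpn : 1 ≤ p ^ n := Nat.one_le_pow _ _ hp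
    rw [← hu n, hpow (p ^ n) (u' n) hpn]
    push_cast
    ring_nf
end

section
/- Let R be a commutative ring and let F be a functor from the category of finite free R-modules (with R-linear maps) to the category of sets such that F(0) is a singleton and, for all finite free modules M, N, the canonical map F(M × N) → F(M) × F(N) induced by the two projections is a bijection. Define on the set F(R): (i) a binary operation by composing the inverse of the bijection F(R²) ≅ F(R) × F(R) with F([1 1]) : F(R²) → F(R), where [1 1] : R² → R is (x,y) ↦ x + y; (ii) a zero element as the image of the unique element of F(0) under F(0 → R); and (iii) for each r ∈ R, a scalar action on F(R) given by F(multiplication-by-r : R → R). Then these operations make F(R) an R-module. -/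
open CategoryTheory

variable (R : Type) [CommRing R]

/-- The category of finite free `R`-modules, as a full subcategory of `ModuleCat R`. -/
abbrev FinFree :=
  CategoryTheory.ObjectProperty.FullSubcategory fun M : ModuleCat.{0} R => Module.Free R M ∧ Module.Finite R M

/-- The zero module as an object of the category of finite free `R`-modules. -/
def FinFree.zeroObj : FinFree R :=
  ⟨ModuleCat.of R PUnit, inferInstance, inferInstance⟩

/-- `R` itself as an object of the category of finite free `R`-modules. -/
def FinFree.line : FinFree R :=
  ⟨ModuleCat.of R R, inferInstanceAs (Module.Free R R), inferInstanceAs (Module.Finite R R)⟩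

variable {R} in
/-- The product of two finite free modules. -/
def FinFree.prod (M N : FinFree R) : FinFree R :=
  ⟨ModuleCat.of R (M.obj × N.obj),
    haveI := M.property.1; haveI := M.property.2; haveI := N.property.1; haveI := N.property.2
    inferInstanceAs (Module.Free R (M.obj × N.obj)),
    haveI := M.property.1; haveI := M.property.2; haveI := N.property.1; haveI := N.property.2
    inferInstanceAs (Module.Finite R (M.obj × N.obj))⟩

variable {R} in
/-- The first projection. -/
def FinFree.fstHom (M N : FinFree R) : FinFree.prod M N ⟶ M :=
  ObjectProperty.homMk (ModuleCat.ofHom (LinearMap.fst R M.obj N.obj))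

variable {R} in
/-- The second projection. -/
def FinFree.sndHom (M N : FinFree R) : FinFree.prod M N ⟶ N :=
  ObjectProperty.homMk (ModuleCat.ofHom (LinearMap.snd R M.obj N.obj))

/-- The addition map `[1 1] : R² → R`, `(x, y) ↦ x + y`. -/
def FinFree.sumHom : FinFree.prod (FinFree.line R) (FinFree.line R) ⟶ FinFree.line R :=
  ObjectProperty.homMk (ModuleCat.ofHom (LinearMap.fst R R R + LinearMap.snd R R R))

/-- The initial map `0 → R`. -/
def FinFree.fromZero : FinFree.zeroObj R ⟶ FinFree.line R :=
  ObjectProperty.homMk (ModuleCat.ofHom 0)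

variable {R} in
/-- Multiplication by `r`, as an endomorphism of `R`. -/
def FinFree.scalHom (r : R) : FinFree.line R ⟶ FinFree.line R :=
  ObjectProperty.homMk (ModuleCat.ofHom (r • (LinearMap.id : R →ₗ[R] R)))

variable {R} in
/-- Lift of two maps into a product. -/
def FF.lift {A M N : FinFree R} (u : A ⟶ M) (v : A ⟶ N) : A ⟶ FinFree.prod M N :=
  ObjectProperty.homMk (ModuleCat.ofHom (LinearMap.prod u.hom.hom v.hom.hom))

variable {R} in
lemma FF.hom_ext {M N : FinFree R} {f g : M ⟶ N} (h : ∀ x, f.hom.hom x = g.hom.hom x) :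
    f = g := by
  apply ObjectProperty.hom_ext
  exact ModuleCat.hom_ext (LinearMap.ext h)

section FFAux

variable {R}
variable (F : FinFree R ⥤ Type)
  (hprod : ∀ M N : FinFree R,
      Function.Bijective fun x : F.obj (FinFree.prod M N) =>
        (F.map (FinFree.fstHom M N) x, F.map (FinFree.sndHom M N) x))

/-- The pairing `F(M) × F(N) → F(M × N)`. -/
noncomputable def FF.pair {M N : FinFree R} (a : F.obj M) (b : F.obj N) :
    F.obj (FinFree.prod M N) :=
  (Equiv.ofBijective _ (hprod M N)).symm (a, b)

lemma FF.fst_pair {M N : FinFree R} (a : F.obj M) (b : F.obj N) :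
    F.map (FinFree.fstHom M N) (FF.pair F hprod a b) = a :=
  congrArg Prod.fst ((Equiv.ofBijective _ (hprod M N)).apply_symm_apply (a, b))

lemma FF.snd_pair {M N : FinFree R} (a : F.obj M) (b : F.obj N) :
    F.map (FinFree.sndHom M N) (FF.pair F hprod a b) = b :=
  congrArg Prod.snd ((Equiv.ofBijective _ (hprod M N)).apply_symm_apply (a, b))

include hprod in
lemma FF.ext {M N : FinFree R} {x y : F.obj (FinFree.prod M N)}
    (h1 : F.map (FinFree.fstHom M N) x = F.map (FinFree.fstHom M N) y)
    (h2 : F.map (FinFree.sndHom M N) x = F.map (FinFree.sndHom M N) y) : x = y :=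
  (hprod M N).1 (Prod.ext h1 h2)

lemma FF.map_lift {A M N : FinFree R} (u : A ⟶ M) (v : A ⟶ N) (x : F.obj A) :
    F.map (FF.lift u v) x = FF.pair F hprod (F.map u x) (F.map v x) := by
  apply FF.ext F hprod
  · rw [← FunctorToTypes.map_comp_apply,
      show FF.lift u v ≫ FinFree.fstHom M N = u from rfl, FF.fst_pair]
  · rw [← FunctorToTypes.map_comp_apply,
      show FF.lift u v ≫ FinFree.sndHom M N = v from rfl, FF.snd_pair]

variable (pt : F.obj (FinFree.zeroObj R)) (hpt : ∀ x, x = pt)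

include hpt in
/-- Any map `A ⟶ R` that is zero sends everything to the distinguished zero point. -/
lemma FF.map_zero_hom {A : FinFree R} (x : F.obj A) :
    F.map (ObjectProperty.homMk (ModuleCat.ofHom (0 : A.obj →ₗ[R] R)) : A ⟶ FinFree.line R) x
      = F.map (FinFree.fromZero R) pt := by
  have h : (ObjectProperty.homMk (ModuleCat.ofHom (0 : A.obj →ₗ[R] R)) : A ⟶ FinFree.line R)
      = (ObjectProperty.homMk (ModuleCat.ofHom (0 : A.obj →ₗ[R] PUnit)) : A ⟶ FinFree.zeroObj R) ≫
        FinFree.fromZero R := FF.hom_ext fun _ => rfl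
  calc F.map (ObjectProperty.homMk (ModuleCat.ofHom (0 : A.obj →ₗ[R] R)) : A ⟶ FinFree.line R) x
      = F.map ((ObjectProperty.homMk (ModuleCat.ofHom (0 : A.obj →ₗ[R] PUnit)) : A ⟶ FinFree.zeroObj R) ≫
          FinFree.fromZero R) x := congrArg (fun f => F.map f x) h
    _ = F.map (FinFree.fromZero R)
          (F.map (ObjectProperty.homMk (ModuleCat.ofHom (0 : A.obj →ₗ[R] PUnit)) : A ⟶ FinFree.zeroObj R) x) :=
        FunctorToTypes.map_comp_apply F _ _ x
    _ = F.map (FinFree.fromZero R) pt := congrArg _ (hpt _)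

end FFAux

/-- Let `F` be a set-valued functor on finite free `R`-modules such that
`F(0)` is a singleton and `F(M × N) → F(M) × F(N)` is always bijective.  Define on `F(R)`
an addition (via the inverse of `F(R²) ≅ F(R) × F(R)` followed by `F([1 1])`), a zero
(the image of the unique point of `F(0)`), and a scalar action (`r` acts by
`F(mult-by-r)`).  Then these operations make `F(R)` an `R`-module. -/
theorem stmt4 (F : FinFree R ⥤ Type)
    (pt : F.obj (FinFree.zeroObj R)) (hpt : ∀ x, x = pt)
    (hprod : ∀ M N : FinFree R,
      Function.Bijective fun x : F.obj (FinFree.prod M N) =>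
        (F.map (FinFree.fstHom M N) x, F.map (FinFree.sndHom M N) x)) :
    let add : F.obj (FinFree.line R) → F.obj (FinFree.line R) → F.obj (FinFree.line R) :=
      fun a b => F.map (FinFree.sumHom R)
        ((Equiv.ofBijective _ (hprod (FinFree.line R) (FinFree.line R))).symm (a, b));
    let zero : F.obj (FinFree.line R) := F.map (FinFree.fromZero R) pt;
    let smul : R → F.obj (FinFree.line R) → F.obj (FinFree.line R) :=
      fun r a => F.map (FinFree.scalHom r) a;
    (∀ a b, add a b = add b a) ∧
    (∀ a b c, add (add a b) c = add a (add b c)) ∧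
    (∀ a, add a zero = a) ∧
    (∀ a, ∃ b, add a b = zero) ∧
    (∀ a, smul 1 a = a) ∧
    (∀ r a b, smul r (add a b) = add (smul r a) (smul r b)) ∧
    (∀ r s a, smul (r + s) a = add (smul r a) (smul s a)) ∧
    (∀ r s a, smul (r * s) a = smul s (smul r a)) ∧
    (∀ a, smul 0 a = zero) ∧
    (∀ r, smul r zero = zero) := by
  intro add zero smul
  have hadd : ∀ a b, add a b = F.map (FinFree.sumHom R) (FF.pair F hprod a b) :=
    fun a b => rfl
  have mm : ∀ {A B C : FinFree R} (f : A ⟶ B) (g : B ⟶ C) (x : F.obj A),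
      F.map g (F.map f x) = F.map (f ≫ g) x :=
    fun f g x => (FunctorToTypes.map_comp_apply F f g x).symm
  refine ⟨?_, ?_, ?_, ?_, ?_, ?_, ?_, ?_, ?_, ?_⟩
  · -- commutativity
    intro a b
    rw [hadd, hadd, show FF.pair F hprod b a
        = F.map (FF.lift (FinFree.sndHom (FinFree.line R) (FinFree.line R))
            (FinFree.fstHom (FinFree.line R) (FinFree.line R))) (FF.pair F hprod a b) by
      rw [FF.map_lift F hprod, FF.fst_pair F hprod, FF.snd_pair F hprod], mm,
      show FF.lift (FinFree.sndHom (FinFree.line R) (FinFree.line R))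
          (FinFree.fstHom (FinFree.line R) (FinFree.line R)) ≫ FinFree.sumHom R
        = FinFree.sumHom R from FF.hom_ext fun x => add_comm x.2 x.1]
  · -- associativity
    intro a b c
    set P := FinFree.prod (FinFree.line R) (FinFree.line R) with hP
    set x : F.obj (FinFree.prod P (FinFree.line R)) :=
      FF.pair F hprod (FF.pair F hprod a b) c with hx
    set α : FinFree.prod P (FinFree.line R) ⟶ FinFree.prod (FinFree.line R) P :=
      FF.lift (FinFree.fstHom P (FinFree.line R) ≫ FinFree.fstHom (FinFree.line R) (FinFree.line R))
        (FF.lift (FinFree.fstHom P (FinFree.line R) ≫ FinFree.sndHom (FinFree.line R) (FinFree.line R))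
          (FinFree.sndHom P (FinFree.line R))) with hα
    have h1 : add (add a b) c
        = F.map (FF.lift (FinFree.fstHom P (FinFree.line R) ≫ FinFree.sumHom R)
            (FinFree.sndHom P (FinFree.line R)) ≫ FinFree.sumHom R) x := by
      rw [hadd, hadd, ← mm, FF.map_lift F hprod, ← mm, FF.fst_pair F hprod, FF.snd_pair F hprod]
    have h2 : F.map α x = FF.pair F hprod a (FF.pair F hprod b c) := by
      rw [hα, FF.map_lift F hprod, FF.map_lift F hprod, ← mm, ← mm,
        FF.fst_pair F hprod, FF.fst_pair F hprod, FF.snd_pair F hprod, FF.snd_pair F hprod]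
    have h3 : add a (add b c)
        = F.map (α ≫ (FF.lift (FinFree.fstHom (FinFree.line R) P)
            (FinFree.sndHom (FinFree.line R) P ≫ FinFree.sumHom R) ≫ FinFree.sumHom R)) x := by
      rw [← mm, ← mm, h2, FF.map_lift F hprod, FF.fst_pair F hprod, ← mm,
        FF.snd_pair F hprod, hadd, hadd]
    rw [h1, h3]
    exact congrArg (fun f => F.map f x) (FF.hom_ext fun y => add_assoc y.1.1 y.1.2 y.2)
  · -- add zero
    intro a
    rw [hadd]
    have e1 : FF.pair F hprod a zero
        = F.map (FF.lift (𝟙 (FinFree.line R))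
            ((ObjectProperty.homMk (ModuleCat.ofHom (0 : (FinFree.line R).obj →ₗ[R] R)) : FinFree.line R ⟶ FinFree.line R))) a := by
      rw [FF.map_lift F hprod, FunctorToTypes.map_id_apply]
      exact congrArg (fun y => FF.pair F hprod a y) (FF.map_zero_hom F pt hpt a).symm
    rw [e1, mm, show FF.lift (𝟙 (FinFree.line R))
        ((ObjectProperty.homMk (ModuleCat.ofHom (0 : (FinFree.line R).obj →ₗ[R] R)) : FinFree.line R ⟶ FinFree.line R)) ≫ FinFree.sumHom R
      = 𝟙 (FinFree.line R) from FF.hom_ext fun y => add_zero y, FunctorToTypes.map_id_apply]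
  · -- negation
    intro a
    refine ⟨F.map (FinFree.scalHom (-1 : R)) a, ?_⟩
    rw [hadd]
    have e1 : FF.pair F hprod a (F.map (FinFree.scalHom (-1 : R)) a)
        = F.map (FF.lift (𝟙 (FinFree.line R)) (FinFree.scalHom (-1 : R))) a := by
      rw [FF.map_lift F hprod, FunctorToTypes.map_id_apply]
    rw [e1, mm, show FF.lift (𝟙 (FinFree.line R)) (FinFree.scalHom (-1 : R)) ≫ FinFree.sumHom R
        = (ObjectProperty.homMk (ModuleCat.ofHom (0 : (FinFree.line R).obj →ₗ[R] R)) : FinFree.line R ⟶ FinFree.line R) from FF.hom_ext fun y => by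
          show y + (-1 : R) • y = 0
          simp]
    exact FF.map_zero_hom F pt hpt a
  · -- smul 1
    intro a
    show F.map (FinFree.scalHom (1 : R)) a = a
    rw [show FinFree.scalHom (1 : R) = 𝟙 (FinFree.line R)
      from FF.hom_ext fun y => one_smul R y, FunctorToTypes.map_id_apply]
  · -- smul distributes over add
    intro r a b
    show F.map (FinFree.scalHom r) (add a b)
      = add (F.map (FinFree.scalHom r) a) (F.map (FinFree.scalHom r) b)
    rw [hadd, hadd, mm,
      show FF.pair F hprod (F.map (FinFree.scalHom r) a) (F.map (FinFree.scalHom r) b)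
        = F.map (FF.lift (FinFree.fstHom (FinFree.line R) (FinFree.line R) ≫ FinFree.scalHom r)
            (FinFree.sndHom (FinFree.line R) (FinFree.line R) ≫ FinFree.scalHom r))
            (FF.pair F hprod a b) by
        rw [FF.map_lift F hprod, ← mm, ← mm, FF.fst_pair F hprod, FF.snd_pair F hprod], mm]
    exact congrArg (fun f => F.map f (FF.pair F hprod a b))
      (FF.hom_ext fun y => smul_add r y.1 y.2)
  · -- add of scalars
    intro r s a
    show F.map (FinFree.scalHom (r + s)) a
      = add (F.map (FinFree.scalHom r) a) (F.map (FinFree.scalHom s) a)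
    rw [hadd, show FF.pair F hprod (F.map (FinFree.scalHom r) a) (F.map (FinFree.scalHom s) a)
        = F.map (FF.lift (FinFree.scalHom r) (FinFree.scalHom s)) a
        from (FF.map_lift F hprod _ _ _).symm, mm]
    exact congrArg (fun f => F.map f a) (FF.hom_ext fun y => add_smul r s y)
  · -- mul of scalars
    intro r s a
    show F.map (FinFree.scalHom (r * s)) a
      = F.map (FinFree.scalHom s) (F.map (FinFree.scalHom r) a)
    rw [mm]
    refine congrArg (fun f => F.map f a) (FF.hom_ext fun y => ?_)
    show (r * s) • y = s • r • y
    rw [smul_smul, mul_comm]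
  · -- smul 0
    intro a
    show F.map (FinFree.scalHom (0 : R)) a = zero
    rw [show FinFree.scalHom (0 : R)
      = (ObjectProperty.homMk (ModuleCat.ofHom (0 : (FinFree.line R).obj →ₗ[R] R)) : FinFree.line R ⟶ FinFree.line R)
      from FF.hom_ext fun y => zero_smul R y]
    exact FF.map_zero_hom F pt hpt a
  · -- smul r zero
    intro r
    show F.map (FinFree.scalHom r) (F.map (FinFree.fromZero R) pt) = zero
    rw [mm, show FinFree.fromZero R ≫ FinFree.scalHom r = FinFree.fromZero R
      from FF.hom_ext fun y => by
        show r • (0 : R) = 0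
        simp]
end

section
/- Let R be a commutative ring, t ∈ R, and let R̂ = lim_n R/t^n R denote the t-adic completion. Assume t is a non-zero-divisor in both R and R̂. Then the sequence 0 → R → R[1/t] × R̂ → R̂[1/t] → 0 is exact, where the first map is a ↦ (a, a) and the second is (b, c) ↦ b − c (using the canonical maps R[1/t] → R̂[1/t] and R̂ → R̂[1/t]). -/
open AdicCompletion

lemma smul_top_eq (R : Type) [CommRing R] (t : R) (n : ℕ) :
    ((Ideal.span {t}) ^ n • (⊤ : Submodule R R)) = Ideal.span {t ^ n} := by
  rw [smul_eq_mul, Ideal.mul_top, Ideal.span_singleton_pow]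

lemma div_lemma (R : Type) [CommRing R] (t : R) (ht : t ∈ nonZeroDivisors R) (n : ℕ)
    (x : AdicCompletion (Ideal.span {t}) R) (hx : x.val n = 0) :
    ∃ y, x = algebraMap R (AdicCompletion (Ideal.span {t}) R) (t ^ n) * y := by
  obtain ⟨F, hF⟩ := AdicCompletion.mk_surjective (Ideal.span {t}) R x
  have hFn : F.val n ∈ Ideal.span {t ^ n} := by
    rw [← smul_top_eq, ← Submodule.Quotient.mk_eq_zero]
    rw [← hF] at hx
    simpa using hx
  have hmem : ∀ m, F.val (m + n) ∈ Ideal.span {t ^ n} := by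
    intro m
    have h1 : F.val n - F.val (m + n) ∈ (((Ideal.span {t}) ^ n • ⊤ : Submodule R R)) :=
      SModEq.sub_mem.mp (F.property (Nat.le_add_left n m))
    rw [smul_top_eq] at h1
    simpa using sub_mem hFn h1
  choose u hu using fun m => Ideal.mem_span_singleton'.mp (hmem m)
  have hcancel : ∀ (a b : R), t ^ n * a = t ^ n * b → a = b := fun a b h =>
    (mul_cancel_left_mem_nonZeroDivisors (pow_mem ht n)).mp h
  have hcau : ∀ m, u m ≡ u (m + 1) [SMOD (((Ideal.span {t}) ^ m • ⊤ : Submodule R R))] := by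
    intro m
    rw [SModEq.sub_mem, smul_top_eq]
    have h1 : F.val (m + n) - F.val (m + 1 + n) ∈ Ideal.span {t ^ (m + n)} := by
      rw [← smul_top_eq]
      exact SModEq.sub_mem.mp (F.property (by omega : m + n ≤ m + 1 + n))
    obtain ⟨c, hc⟩ := Ideal.mem_span_singleton'.mp h1
    refine Ideal.mem_span_singleton'.mpr ⟨c, (hcancel _ _ ?_).symm⟩
    have e : u m * t ^ n - u (m + 1) * t ^ n = c * t ^ (m + n) := by rw [hu, hu, ← hc]
    calc t ^ n * (u m - u (m + 1)) = u m * t ^ n - u (m + 1) * t ^ n := by ring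
      _ = c * t ^ (m + n) := e
      _ = t ^ n * (c * t ^ m) := by ring
  refine ⟨AdicCompletion.mk (Ideal.span {t}) R
    (AdicCauchySequence.mk (I := Ideal.span {t}) (M := R) u hcau), ?_⟩
  rw [← Algebra.smul_def, ← map_smul, ← hF]
  apply Subtype.ext
  funext m
  show Submodule.Quotient.mk (F.val m) = Submodule.Quotient.mk
    ((t ^ n • AdicCauchySequence.mk (I := Ideal.span {t}) (M := R) u hcau).val m)
  have h2 : (t ^ n • AdicCauchySequence.mk (I := Ideal.span {t}) (M := R) u hcau).val m
      = t ^ n * u m := rfl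
  rw [h2, mul_comm, hu]
  exact (F.property (Nat.le_add_right m n))

lemma surj_lemma (R : Type) [CommRing R] (t : R) (ht : t ∈ nonZeroDivisors R) (n : ℕ)
    (c : AdicCompletion (Ideal.span {t}) R) :
    ∃ (a : R) (c' : AdicCompletion (Ideal.span {t}) R),
      c = algebraMap R _ a + algebraMap R _ (t ^ n) * c' := by
  obtain ⟨a, ha⟩ := Submodule.Quotient.mk_surjective _ (c.val n)
  have hx : (c - algebraMap R (AdicCompletion (Ideal.span {t}) R) a).val n = 0 := by
    have h1 : (algebraMap R (AdicCompletion (Ideal.span {t}) R) a).val n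
        = Submodule.Quotient.mk a := rfl
    show c.val n - (algebraMap R (AdicCompletion (Ideal.span {t}) R) a).val n = 0
    rw [h1, ha, sub_self]
  obtain ⟨y, hy⟩ := div_lemma R t ht n _ hx
  exact ⟨a, y, by rw [← hy]; ring⟩

set_option synthInstance.maxHeartbeats 1000000 in
/-- Beauville–Laszlo exact sequence.  Let `R` be a commutative ring,
`t ∈ R`, and `R̂ = lim R/tⁿ` the `t`-adic completion.  Assume `t` is a non-zero-divisor in
both `R` and `R̂`.  Then the sequence `0 → R → R[1/t] × R̂ → R̂[1/t] → 0` is exact, where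
the first map is `a ↦ (a, a)` and the second is `(b, c) ↦ b − c`. -/
theorem stmt16 (R : Type) [CommRing R] (t : R)
    (ht : t ∈ nonZeroDivisors R)
    (ht' : algebraMap R (AdicCompletion (Ideal.span {t}) R) t ∈
      nonZeroDivisors (AdicCompletion (Ideal.span {t}) R)) :
    -- (i) injectivity of `a ↦ (a, a)`
    Function.Injective (fun a : R =>
      ((algebraMap R (Localization.Away t) a,
        algebraMap R (AdicCompletion (Ideal.span {t}) R) a) :
        Localization.Away t × AdicCompletion (Ideal.span {t}) R)) ∧
    -- (ii) exactness in the middle: `(b, c)` maps to `0` iff it comes from `R`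
    (∀ (b : Localization.Away t) (c : AdicCompletion (Ideal.span {t}) R),
      Localization.awayMap (algebraMap R (AdicCompletion (Ideal.span {t}) R)) t b =
          algebraMap (AdicCompletion (Ideal.span {t}) R)
            (Localization.Away
              (algebraMap R (AdicCompletion (Ideal.span {t}) R) t)) c ↔
        ∃ a : R, algebraMap R (Localization.Away t) a = b ∧
          algebraMap R (AdicCompletion (Ideal.span {t}) R) a = c) ∧
    -- (iii) surjectivity of `(b, c) ↦ b − c`
    (∀ d : Localization.Away (algebraMap R (AdicCompletion (Ideal.span {t}) R) t),
      ∃ (b : Localization.Away t) (c : AdicCompletion (Ideal.span {t}) R),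
        d = Localization.awayMap (algebraMap R (AdicCompletion (Ideal.span {t}) R)) t b -
          algebraMap (AdicCompletion (Ideal.span {t}) R)
            (Localization.Away
              (algebraMap R (AdicCompletion (Ideal.span {t}) R) t)) c) := by
  set S := AdicCompletion (Ideal.span {t}) R with hS
  set f := algebraMap R S with hf
  set L := Localization.Away t with hL
  set L' := Localization.Away (f t) with hL'
  set g := Localization.awayMap f t with hg
  have hpow : Submonoid.powers t ≤ nonZeroDivisors R := by
    rintro x ⟨n, rfl⟩; exact pow_mem ht n
  have hpow' : Submonoid.powers (f t) ≤ nonZeroDivisors S := by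
    rintro x ⟨n, rfl⟩; exact pow_mem ht' n
  have hinjL : Function.Injective (algebraMap R L) := IsLocalization.injective L hpow
  have hinjL' : Function.Injective (algebraMap S L') := IsLocalization.injective L' hpow'
  have hgalg : ∀ a : R, g (algebraMap R L a) = algebraMap S L' (f a) := fun a =>
    IsLocalization.map_eq _ a
  refine ⟨?_, ?_, ?_⟩
  · intro a a' h
    exact hinjL (congrArg Prod.fst h)
  · intro b c
    constructor
    · intro hbc
      obtain ⟨⟨a, s⟩, hs⟩ := IsLocalization.surj (Submonoid.powers t) b
      obtain ⟨n, hn⟩ := s.2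
      have hs' : b * algebraMap R L (t ^ n) = algebraMap R L a := by
        rwa [← hn] at hs
      -- apply g
      have h1 : algebraMap S L' c * algebraMap S L' (f (t ^ n)) = algebraMap S L' (f a) := by
        have := congrArg g hs'
        rwa [map_mul, hgalg, hgalg, hbc] at this
      have h2 : c * f (t ^ n) = f a := hinjL' (by rwa [← map_mul] at h1)
      -- evaluate at level n
      have h3 : (f a).val n = 0 := by
        rw [← h2]
        have h4 : (f (t ^ n)).val n = 0 := by
          show (Submodule.Quotient.mk (t ^ n) : R ⧸ ((Ideal.span {t}) ^ n • ⊤ : Submodule R R)) = 0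
          rw [Submodule.Quotient.mk_eq_zero, smul_top_eq]
          exact Ideal.mem_span_singleton_self _
        show c.val n * (f (t ^ n)).val n = 0
        rw [h4, mul_zero]
      have h5 : a ∈ Ideal.span {t ^ n} := by
        rw [← smul_top_eq, ← Submodule.Quotient.mk_eq_zero]
        exact h3
      obtain ⟨a', ha'⟩ := Ideal.mem_span_singleton'.mp h5
      refine ⟨a', ?_, ?_⟩
      · -- b = algebraMap a'
        have hu : IsUnit (algebraMap R L (t ^ n)) :=
          IsLocalization.map_units (M := Submonoid.powers t) L ⟨t ^ n, n, rfl⟩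
        apply hu.mul_left_cancel
        rw [mul_comm _ b, hs', ← ha', mul_comm a' (t ^ n), map_mul]
      · -- f a' = c
        have : f a' * f (t ^ n) = c * f (t ^ n) := by
          rw [← map_mul, ha', h2]
        exact (mul_cancel_right_mem_nonZeroDivisors (hpow' ⟨n, (map_pow f t n).symm⟩)).mp
          (by rwa [map_pow] at this)
    · rintro ⟨a, rfl, rfl⟩
      rw [hgalg]
  · intro d
    obtain ⟨⟨c0, s⟩, hs⟩ := IsLocalization.surj (Submonoid.powers (f t)) d
    obtain ⟨n, hn⟩ := s.2
    have hs' : d * algebraMap S L' (f t ^ n) = algebraMap S L' c0 := by rwa [← hn] at hs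
    obtain ⟨a, c', hc⟩ := surj_lemma R t ht n c0
    set bb := IsLocalization.mk' (M := Submonoid.powers t) L a ⟨t ^ n, n, rfl⟩ with hbb
    have hb : bb * algebraMap R L (t ^ n) = algebraMap R L a :=
      IsLocalization.mk'_spec (M := Submonoid.powers t) L a ⟨t ^ n, n, rfl⟩
    have hgbspec : g bb * algebraMap S L' (f t ^ n) = algebraMap S L' (f a) := by
      have h := congrArg g hb
      rwa [map_mul, hgalg, hgalg, map_pow] at h
    refine ⟨bb, -c', ?_⟩
    have hu : IsUnit (algebraMap S L' (f t ^ n)) :=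
      IsLocalization.map_units (M := Submonoid.powers (f t)) L' ⟨f t ^ n, n, rfl⟩
    apply hu.mul_left_cancel
    rw [mul_comm _ d, hs', map_neg, sub_neg_eq_add, mul_add, mul_comm _ (g bb), hgbspec,
      hc, map_add, map_mul, map_pow f]
end
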